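/- Bound on attracting fixed points of an anti-polynomial: if p is a polynomial over ℂ of degree d ≥ 2 and f(z) = p.eval (conj z), then the set of finite attracting and superattracting fixed points, {z : ℂ | p.eval (conj z) = z ∧ |p.derivative.eval (conj z)| < 1}, is finite and has at most d − 1 elements. (Planar form of the corollary that an anti-rational map of degree d ≥ 2 has at most 2d − 2 attracting or superattracting fixed points: each immediate basin must contain one of the at most d − 1 distinct finite critical points of f.) -/

import Mathlib

open Filter Metric Set Topology Polynomial
open scoped NNReal
set_option maxHeartbeats 1000000

/-- Growth of a polynomial of degree at least 2. -/
lemma poly_growth (q : Polynomial ℂ) (hq : 2 ≤ q.natDegree) :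
    ∃ R : ℝ, 1 ≤ R ∧ ∀ z : ℂ, R ≤ ‖z‖ → 2 * ‖z‖ ≤ ‖q.eval z‖ := by
  set n := q.natDegree with hn
  set a := q.leadingCoeff with ha
  have ha0 : a ≠ 0 := by
    refine Polynomial.leadingCoeff_ne_zero.2 ?_
    intro h
    simp [h] at hn
    omega
  set S : ℝ := ∑ i ∈ Finset.range n, ‖q.coeff i‖ with hS
  have hS0 : 0 ≤ S := Finset.sum_nonneg fun i _ => norm_nonneg _
  refine ⟨max 1 ((S + 2) / ‖a‖), le_max_left _ _, fun z hz => ?_⟩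
  have hz1 : (1:ℝ) ≤ ‖z‖ := le_trans (le_max_left _ _) hz
  have hz2 : (S + 2) / ‖a‖ ≤ ‖z‖ := le_trans (le_max_right _ _) hz
  have hza : S + 2 ≤ ‖a‖ * ‖z‖ := by
    rw [div_le_iff₀ (norm_pos_iff.2 ha0)] at hz2
    linarith [hz2]
  -- q.eval z = a * z^n + ∑_{i<n} coeff i * z^i
  have heval : q.eval z = a * z ^ n + ∑ i ∈ Finset.range n, q.coeff i * z ^ i := by
    have h1 : q.eval z = ∑ i ∈ Finset.range (n + 1), q.coeff i * z ^ i := by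
      rw [Polynomial.eval_eq_sum_range]
    rw [h1, Finset.sum_range_succ]
    rw [Polynomial.coeff_natDegree]
    ring
  have hsum : ‖∑ i ∈ Finset.range n, q.coeff i * z ^ i‖ ≤ S * ‖z‖ ^ (n - 1) := by
    calc ‖∑ i ∈ Finset.range n, q.coeff i * z ^ i‖
        ≤ ∑ i ∈ Finset.range n, ‖q.coeff i * z ^ i‖ := norm_sum_le _ _
      _ ≤ ∑ i ∈ Finset.range n, ‖q.coeff i‖ * ‖z‖ ^ (n - 1) := by
          refine Finset.sum_le_sum fun i hi => ?_
          rw [norm_mul, norm_pow]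
          refine mul_le_mul_of_nonneg_left ?_ (norm_nonneg _)
          exact pow_le_pow_right₀ hz1 (by
            have := Finset.mem_range.1 hi; omega)
      _ = S * ‖z‖ ^ (n - 1) := by rw [← Finset.sum_mul]
  have hzn : ‖z‖ ^ n = ‖z‖ ^ (n - 1) * ‖z‖ := by
    conv_lhs => rw [show n = (n - 1) + 1 by omega]
    rw [pow_succ]
  have hpow : (1:ℝ) ≤ ‖z‖ ^ (n - 1) := one_le_pow₀ hz1
  have key : ‖a * z ^ n‖ - ‖∑ i ∈ Finset.range n, q.coeff i * z ^ i‖ ≥ 2 * ‖z‖ := by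
    rw [norm_mul, norm_pow, hzn]
    have h1 : S * ‖z‖ ^ (n - 1) ≤ ‖z‖ ^ (n-1) * S := by ring_nf; rfl
    have h2 : ‖a‖ * (‖z‖ ^ (n - 1) * ‖z‖) = ‖z‖ ^ (n-1) * (‖a‖ * ‖z‖) := by ring
    have h3 : ‖z‖ ^ (n-1) * (‖a‖*‖z‖) - ‖z‖^(n-1) * S ≥ ‖z‖^(n-1) * 2 := by
      have : ‖a‖ * ‖z‖ - S ≥ 2 := by linarith
      nlinarith [hpow]
    have hzz : ‖z‖ ≤ ‖z‖ ^ (n-1) := by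
      calc ‖z‖ = ‖z‖ ^ 1 := (pow_one _).symm
        _ ≤ ‖z‖ ^ (n-1) := pow_le_pow_right₀ hz1 (by omega)
    have h4 : ‖z‖ ^ (n-1) * 2 ≥ 2 * ‖z‖ := by nlinarith
    nlinarith [hsum]
  calc 2 * ‖z‖ ≤ ‖a * z ^ n‖ - ‖∑ i ∈ Finset.range n, q.coeff i * z ^ i‖ := key
    _ ≤ ‖a * z ^ n + ∑ i ∈ Finset.range n, q.coeff i * z ^ i‖ := by
        have h := norm_add_le (a * z ^ n + ∑ i ∈ Finset.range n, q.coeff i * z ^ i)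
          (-∑ i ∈ Finset.range n, q.coeff i * z ^ i)
        simp only [add_neg_cancel_right, norm_neg] at h
        linarith
    _ = ‖q.eval z‖ := by rw [← heval]

lemma poly_proper (q : Polynomial ℂ) (hq : 2 ≤ q.natDegree) {K : Set ℂ} (hK : IsCompact K) :
    IsCompact ((fun z => q.eval z) ⁻¹' K) := by
  obtain ⟨R, hR1, hR⟩ := poly_growth q hq
  obtain ⟨M, hM⟩ := hK.isBounded.subset_closedBall 0
  refine Metric.isCompact_of_isClosed_isBounded
    (hK.isClosed.preimage q.continuous) ?_
  refine (Metric.isBounded_closedBall (x := (0:ℂ)) (r := R + M + 1)).subset ?_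
  intro z hz
  simp only [mem_preimage] at hz
  have hzK := hM hz
  simp only [Metric.mem_closedBall, Complex.dist_eq, sub_zero] at hzK ⊢
  by_contra hcon
  push_neg at hcon
  have hzR : R ≤ ‖z‖ := by
    have : (0:ℝ) ≤ M := le_trans (norm_nonneg _) hzK
    nlinarith
  have := hR z hzR
  nlinarith [norm_nonneg z]

/-- Uniqueness of continuous lifts through a polynomial with no critical points on `B`. -/
lemma lift_unique {q : Polynomial ℂ} {B : Set ℂ}
    (hcrit : ∀ z ∈ B, q.derivative.eval z ≠ 0)
    (hpre : ∀ z : ℂ, q.eval z ∈ B → z ∈ B)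
    {S : Set ℂ} (hS : IsOpen S) (hSc : IsPreconnected S)
    {H σ₁ σ₂ : ℂ → ℂ} (hH : ∀ x ∈ S, H x ∈ B)
    (h1 : ContinuousOn σ₁ S) (h2 : ContinuousOn σ₂ S)
    (e1 : ∀ x ∈ S, q.eval (σ₁ x) = H x) (e2 : ∀ x ∈ S, q.eval (σ₂ x) = H x)
    {x₀ : ℂ} (hx₀S : x₀ ∈ S) (hagree : σ₁ x₀ = σ₂ x₀) : EqOn σ₁ σ₂ S := by
  set U : Set ℂ := {x | x ∈ S ∧ σ₁ x = σ₂ x} with hU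
  set V : Set ℂ := {x | x ∈ S ∧ σ₁ x ≠ σ₂ x} with hV
  have hVopen : IsOpen V := by
    have : V = S ∩ (fun x => σ₁ x - σ₂ x) ⁻¹' ({0}ᶜ) := by
      ext x
      simp only [hV, mem_setOf_eq, mem_inter_iff, mem_preimage, mem_compl_iff,
        mem_singleton_iff, sub_eq_zero]
    rw [this]
    exact (h1.sub h2).isOpen_inter_preimage hS isOpen_compl_singleton
  have hUopen : IsOpen U := by
    rw [isOpen_iff_mem_nhds]
    rintro x ⟨hxS, hxeq⟩
    have hyB : σ₁ x ∈ B := hpre _ (by rw [e1 x hxS]; exact hH x hxS)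
    have hsd := q.hasStrictDerivAt (σ₁ x)
    have hne := hcrit _ hyB
    have hF := hsd.hasStrictFDerivAt_equiv hne
    have hlinv := hF.eventually_left_inverse
    -- eventually, both σ₁ y and σ₂ y are in the region where linv ∘ q.eval = id
    have hc1 : ContinuousAt σ₁ x := h1.continuousAt (hS.mem_nhds hxS)
    have hc2 : ContinuousAt σ₂ x := h2.continuousAt (hS.mem_nhds hxS)
    have hev1 : ∀ᶠ y in 𝓝 x, hF.localInverse _ _ _ (q.eval (σ₁ y)) = σ₁ y := hc1.eventually hlinv
    have hev2 : ∀ᶠ y in 𝓝 x, hF.localInverse _ _ _ (q.eval (σ₂ y)) = σ₂ y := by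
      have hc2' : ContinuousAt σ₂ x := hc2
      have : Tendsto σ₂ (𝓝 x) (𝓝 (σ₁ x)) := by rw [hxeq]; exact hc2'
      exact this.eventually hlinv
    have hevS : ∀ᶠ y in 𝓝 x, y ∈ S := hS.mem_nhds hxS
    filter_upwards [hev1, hev2, hevS] with y hy1 hy2 hyS
    refine ⟨hyS, ?_⟩
    rw [← hy1, ← hy2, e1 y hyS, e2 y hyS]
  -- preconnectedness argument
  intro x hxS
  by_contra hne
  have hcover : S ⊆ U ∪ V := fun y hy => by
    by_cases h : σ₁ y = σ₂ y
    · exact Or.inl ⟨hy, h⟩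
    · exact Or.inr ⟨hy, h⟩
  have hUne : (S ∩ U).Nonempty := ⟨x₀, hx₀S, hx₀S, hagree⟩
  have hVne : (S ∩ V).Nonempty := ⟨x, hxS, hxS, hne⟩
  obtain ⟨y, hy⟩ := hSc U V hUopen hVopen hcover hUne hVne
  exact hy.2.2.2 hy.2.1.2

/-- The norm of the continuous linear map underlying `unitsEquivAut`. -/
lemma norm_unitsEquivAut_symm (a : ℂ) (ha : a ≠ 0) :
    ‖((ContinuousLinearEquiv.unitsEquivAut ℂ (Units.mk0 a ha)).symm : ℂ →L[ℂ] ℂ)‖₊ = ‖a‖₊⁻¹ := by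
  have h : ∀ x : ℂ, ((ContinuousLinearEquiv.unitsEquivAut ℂ (Units.mk0 a ha)).symm :
      ℂ →L[ℂ] ℂ) x = x * a⁻¹ := fun x =>
    ContinuousLinearEquiv.unitsEquivAut_apply_symm _ x
  have hle : ‖((ContinuousLinearEquiv.unitsEquivAut ℂ (Units.mk0 a ha)).symm :
      ℂ →L[ℂ] ℂ)‖₊ ≤ ‖a‖₊⁻¹ := by
    refine ContinuousLinearMap.opNNNorm_le_bound _ _ fun x => ?_
    rw [h x]
    rw [nnnorm_mul, nnnorm_inv]
    rw [mul_comm]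
  have hge : ‖a‖₊⁻¹ ≤ ‖((ContinuousLinearEquiv.unitsEquivAut ℂ (Units.mk0 a ha)).symm :
      ℂ →L[ℂ] ℂ)‖₊ := by
    have := ContinuousLinearMap.le_opNNNorm ((ContinuousLinearEquiv.unitsEquivAut ℂ
      (Units.mk0 a ha)).symm : ℂ →L[ℂ] ℂ) 1
    rw [h 1, one_mul, nnnorm_inv, nnnorm_one, mul_one] at this
    exact this
  exact le_antisymm hle hge

/-- Uniform local inverses of a polynomial along a compact subset of a critical-point-free
open set. -/
lemma local_inv_uniform {q : Polynomial ℂ} {B : Set ℂ} (hB : IsOpen B)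
    (hcrit : ∀ z ∈ B, q.derivative.eval z ≠ 0)
    {C : Set ℂ} (hC : IsCompact C) (hCB : C ⊆ B) :
    ∃ δ > 0, ∃ ε > 0, ∀ x ∈ C,
      (Set.InjOn (fun z => q.eval z) (ball x (2*δ))) ∧ ball x (2*δ) ⊆ B ∧
      ∃ η : ℂ → ℂ, ContinuousOn η (ball (q.eval x) ε) ∧ η (q.eval x) = x ∧
        ∀ w ∈ ball (q.eval x) ε, q.eval (η w) = w ∧ η w ∈ ball x (2*δ) := by
  rcases C.eq_empty_or_nonempty with rfl | hCne
  · exact ⟨1, one_pos, 1, one_pos, fun x hx => absurd hx (notMem_empty x)⟩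
  obtain ⟨t, ht, htB⟩ := hC.exists_cthickening_subset_open hB hCB
  set C' : Set ℂ := Metric.cthickening t C with hC'def
  have hC'comp : IsCompact C' := hC.cthickening
  have hC'ne : C'.Nonempty := hCne.mono (Metric.self_subset_cthickening C)
  -- min of |q'| on C'
  obtain ⟨xm, hxm, hxmin⟩ := hC'comp.exists_isMinOn hC'ne
    ((q.derivative.continuous.norm).continuousOn)
  set m : ℝ := ‖q.derivative.eval xm‖ with hm
  have hm0 : 0 < m := norm_pos_iff.2 (hcrit _ (htB hxm))
  -- max of |q''| on C'
  obtain ⟨xM, hxM, hxmax⟩ := hC'comp.exists_isMaxOn hC'ne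
    ((q.derivative.derivative.continuous.norm).continuousOn)
  set M₂ : ℝ := ‖q.derivative.derivative.eval xM‖ with hM₂
  have hM₂0 : 0 ≤ M₂ := norm_nonneg _
  set δ : ℝ := min (t/2) (m/(8*(M₂+1))) with hδdef
  have hδ0 : 0 < δ := lt_min (by linarith) (by positivity)
  set ε : ℝ := (m/2) * δ with hεdef
  have hε0 : 0 < ε := by positivity
  refine ⟨δ, hδ0, ε, hε0, fun x hx => ?_⟩
  have hxB : x ∈ B := hCB hx
  have hball : ball x (2*δ) ⊆ C' := by
    intro y hy
    refine Metric.mem_cthickening_of_dist_le y x t C hx ?_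
    have : dist y x < 2 * δ := mem_ball.1 hy
    have h2δ : 2 * δ ≤ t := by
      have := min_le_left (t/2) (m/(8*(M₂+1)))
      rw [hδdef]; linarith [this]
    linarith
  have hballB : ball x (2*δ) ⊆ B := hball.trans htB
  set a : ℂ := q.derivative.eval x with ha
  have ha0 : a ≠ 0 := hcrit _ hxB
  have hma : m ≤ ‖a‖ := hxmin (hball (mem_ball_self (by linarith)))
  -- derivative of q' is bounded by M₂ on the ball, so q' is close to a on the ball
  have hq'close : ∀ z ∈ ball x (2*δ), ‖q.derivative.eval z - a‖ ≤ m/4 := by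
    intro z hz
    have hmv := Convex.norm_image_sub_le_of_norm_hasDerivWithin_le
      (f := fun w => q.derivative.eval w) (f' := fun w => q.derivative.derivative.eval w)
      (s := ball x (2*δ)) (C := M₂)
      (fun w _ => (q.derivative.hasDerivAt w).hasDerivWithinAt)
      (fun w hw => hxmax (hball hw)) (convex_ball _ _) (mem_ball_self (by linarith)) hz
    have hdist : ‖z - x‖ ≤ 2*δ := le_of_lt (by simpa [dist_eq_norm] using mem_ball.1 hz)
    have hδm : 2 * δ * M₂ ≤ m / 4 := by
      have hδle : δ ≤ m/(8*(M₂+1)) := min_le_right _ _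
      have h1 : 2 * δ * M₂ ≤ 2 * (m/(8*(M₂+1))) * M₂ := by nlinarith
      have h2 : 2 * (m/(8*(M₂+1))) * M₂ ≤ m/4 := by
        rw [show 2 * (m/(8*(M₂+1))) * M₂ = (2*m*M₂)/(8*(M₂+1)) by ring,
          div_le_div_iff₀ (by positivity) (by norm_num)]
        nlinarith
      linarith
    calc ‖q.derivative.eval z - a‖ ≤ M₂ * ‖z - x‖ := hmv
      _ ≤ M₂ * (2*δ) := by nlinarith
      _ ≤ m/4 := by linarith [hδm]
  -- ApproximatesLinearOn
  set e : ℂ ≃L[ℂ] ℂ := ContinuousLinearEquiv.unitsEquivAut ℂ (Units.mk0 a ha0) with he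
  have heapp : ∀ z : ℂ, (e : ℂ →L[ℂ] ℂ) z = z * a := fun z => rfl
  have happrox : ApproximatesLinearOn (fun z => q.eval z) (e : ℂ →L[ℂ] ℂ)
      (ball x (2*δ)) (Real.toNNReal (m/4)) := by
    intro z hz w hw
    have hmv := Convex.norm_image_sub_le_of_norm_hasDerivWithin_le
      (f := fun u => q.eval u - u * a) (f' := fun u => q.derivative.eval u - a)
      (s := ball x (2*δ)) (C := m/4)
      (fun u _ => by
        have h1 := (q.hasDerivAt u).sub ((hasDerivAt_id u).mul_const a)
        exact (h1.congr_deriv (by simp)).hasDerivWithinAt)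
      (fun u hu => hq'close u hu) (convex_ball _ _) hw hz
    have : q.eval z - q.eval w - (e : ℂ →L[ℂ] ℂ) (z - w)
        = (q.eval z - z * a) - (q.eval w - w * a) := by
      rw [heapp]; ring
    rw [this]
    calc ‖(q.eval z - z * a) - (q.eval w - w * a)‖ ≤ m/4 * ‖z - w‖ := hmv
      _ = Real.toNNReal (m/4) * ‖z - w‖ := by
          rw [Real.coe_toNNReal _ (by positivity)]
  have hN : ‖(e.symm : ℂ →L[ℂ] ℂ)‖₊ = ‖a‖₊⁻¹ := norm_unitsEquivAut_symm a ha0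
  have hana : (0:ℝ) < ‖a‖ := norm_pos_iff.2 ha0
  have hc : Real.toNNReal (m/4) < ‖(e.symm : ℂ →L[ℂ] ℂ)‖₊⁻¹ := by
    rw [hN, inv_inv]
    have : ‖a‖₊ = Real.toNNReal ‖a‖ := by
      rw [← coe_nnnorm, Real.toNNReal_coe]
    rw [this, Real.toNNReal_lt_toNNReal_iff hana]
    linarith
  set Φ := happrox.toOpenPartialHomeomorph (fun z => q.eval z) (ball x (2*δ)) (Or.inr hc)
    isOpen_ball with hΦ
  have hsource : Φ.source = ball x (2*δ) := rfl
  have hcoe : (Φ : ℂ → ℂ) = fun z => q.eval z := rfl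
  have hsubtarget : ball (q.eval x) ε ⊆ Φ.target := by
    have h1 := happrox.closedBall_subset_target (Or.inr hc) isOpen_ball
      (b := x) (le_of_lt hδ0) (closedBall_subset_ball (by linarith))
    refine subset_trans ?_ h1
    refine Metric.ball_subset_closedBall.trans (Metric.closedBall_subset_closedBall ?_)
    rw [hN]
    have hX : (((‖a‖₊⁻¹)⁻¹ : ℝ≥0) : ℝ) = ‖a‖ := by simp
    rw [hX, Real.coe_toNNReal _ (by positivity), hεdef]
    nlinarith
  refine ⟨happrox.injOn (Or.inr hc), hballB, Φ.symm, ?_, ?_, ?_⟩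
  · exact Φ.continuousOn_symm.mono hsubtarget
  · have : x ∈ Φ.source := by rw [hsource]; exact mem_ball_self (by linarith)
    have h := Φ.left_inv this
    rwa [hcoe] at h
  · intro w hw
    have hwt : w ∈ Φ.target := hsubtarget hw
    constructor
    · have h := Φ.right_inv hwt
      rwa [hcoe] at h
    · have := Φ.map_target hwt
      rwa [hsource] at this

/-- Extension of a lift past a boundary point of the disk, given uniform local inverses. -/
lemma lift_boundary_point {q : Polynomial ℂ} {B : Set ℂ}
    (hcrit : ∀ z ∈ B, q.derivative.eval z ≠ 0)
    (hpre : ∀ z : ℂ, q.eval z ∈ B → z ∈ B)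
    {c : ℂ} {r₀ s : ℝ} (hs0 : 0 < s) (hsr : s < r₀)
    {H : ℂ → ℂ} (hHc : ContinuousOn H (ball c r₀)) (hHB : ∀ x ∈ ball c r₀, H x ∈ B)
    {σ : ℂ → ℂ} (hσc : ContinuousOn σ (ball c s))
    (hσe : ∀ x ∈ ball c s, q.eval (σ x) = H x)
    {C : Set ℂ} (hCcomp : IsCompact C) (hCB : C ⊆ B)
    (hCmem : ∀ x ∈ ball c s, σ x ∈ C)
    {δ ε : ℝ} (hδ0 : 0 < δ) (hε0 : 0 < ε)
    (huni : ∀ x ∈ C, (Set.InjOn (fun z => q.eval z) (ball x (2*δ))) ∧ ball x (2*δ) ⊆ B ∧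
      ∃ η : ℂ → ℂ, ContinuousOn η (ball (q.eval x) ε) ∧ η (q.eval x) = x ∧
        ∀ w ∈ ball (q.eval x) ε, q.eval (η w) = w ∧ η w ∈ ball x (2*δ))
    {ε₂ : ℝ} (hε₂0 : 0 < ε₂) (hε₂r : ε₂ ≤ (r₀ - s)/2)
    (hε₂ : ∀ x ∈ closedBall c ((s+r₀)/2), ∀ y ∈ closedBall c ((s+r₀)/2),
      dist x y < ε₂ → dist (H x) (H y) < ε)
    {ζ : ℂ} (hζ : ζ ∈ sphere c s) :
    ∃ τ : ℂ → ℂ, ContinuousOn τ (ball ζ ε₂) ∧ (∀ x ∈ ball ζ ε₂, q.eval (τ x) = H x) ∧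
      EqOn σ τ (ball ζ ε₂ ∩ ball c s) := by
  have hζc : dist ζ c = s := mem_sphere.1 hζ
  have hζball : ζ ∈ ball c r₀ := by
    rw [mem_ball, hζc]; exact hsr
  -- the radial path
  set γ : ℝ → ℂ := fun t => c + (t:ℂ) * (ζ - c) with hγdef
  have hγc : Continuous γ := by continuity
  have hγdist : ∀ t : ℝ, dist (γ t) c = |t| * s := by
    intro t
    rw [dist_eq_norm, hγdef]
    simp only [add_sub_cancel_left]
    rw [norm_mul, Complex.norm_real]
    rw [← dist_eq_norm, hζc]
    rfl
  have hγζ : ∀ t : ℝ, dist (γ t) ζ = |1 - t| * s := by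
    intro t
    rw [dist_eq_norm]
    have : γ t - ζ = ((t:ℂ) - 1) * (ζ - c) := by rw [hγdef]; ring
    rw [this, norm_mul]
    have h1 : ‖(t:ℂ) - 1‖ = |1 - t| := by
      rw [show ((t:ℂ) - 1) = ((t - 1 : ℝ) : ℂ) by push_cast; ring, Complex.norm_real]
      rw [abs_sub_comm]; rfl
    rw [h1, ← dist_eq_norm, hζc]
  have hγmem : ∀ t ∈ Set.Ico (0:ℝ) 1, γ t ∈ ball c s := by
    intro t ht
    rw [mem_ball, hγdist, abs_of_nonneg ht.1]
    calc t * s < 1 * s := by nlinarith [ht.2]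
      _ = s := one_mul s
  have hγ1 : γ 1 = ζ := by rw [hγdef]; push_cast; ring
  -- path in C
  set u : ℝ → ℂ := fun t => σ (γ t) with hudef
  have huC : ∀ t ∈ Set.Ico (0:ℝ) 1, u t ∈ C := fun t ht => hCmem _ (hγmem t ht)
  have huc : ContinuousOn u (Set.Ico (0:ℝ) 1) :=
    hσc.comp hγc.continuousOn (fun t ht => hγmem t ht)
  have hue : ∀ t ∈ Set.Ico (0:ℝ) 1, q.eval (u t) = H (γ t) :=
    fun t ht => hσe _ (hγmem t ht)
  -- the filter of approach to 1
  set l : Filter ℝ := 𝓝[Set.Ico (0:ℝ) 1] 1 with hldef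
  haveI hlne : l.NeBot := by
    rw [hldef]
    refine mem_closure_iff_nhdsWithin_neBot.mp ?_
    rw [closure_Ico (by norm_num : (0:ℝ) ≠ 1)]
    exact ⟨zero_le_one, le_refl 1⟩
  have hIcomem : ∀ a : ℝ, a < 1 → Set.Ico a 1 ∈ l := by
    intro a ha
    rw [hldef, mem_nhdsWithin]
    exact ⟨Set.Ioi a, isOpen_Ioi, ha, fun x hx => ⟨le_of_lt hx.1, hx.2.2⟩⟩
  have hImem : Set.Ico (0:ℝ) 1 ∈ l := self_mem_nhdsWithin
  -- a cluster point of the path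
  set tseq : ℕ → ℝ := fun n => 1 - 1/(n+2 : ℝ) with htseq
  have htmem : ∀ n : ℕ, tseq n ∈ Set.Ico (0:ℝ) 1 := by
    intro n
    constructor
    · rw [htseq]
      have h1 : 1/(n+2:ℝ) ≤ 1/2 := by
        apply div_le_div_of_nonneg_left <;> [norm_num; norm_num; (push_cast; linarith)]
      simp only
      linarith
    · rw [htseq]
      have : 0 < 1/(n+2:ℝ) := by positivity
      simp only
      linarith
  have htto : Tendsto tseq atTop (𝓝 1) := by
    rw [htseq]
    have h1 : Tendsto (fun n : ℕ => 1/(n+2:ℝ)) atTop (𝓝 0) := by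
      simp only [one_div]
      exact Tendsto.comp tendsto_inv_atTop_zero
        (tendsto_atTop_add_const_right _ 2 tendsto_natCast_atTop_atTop)
    have := h1.const_sub 1
    simpa using this
  have htl : Tendsto tseq atTop l := by
    rw [hldef]
    exact tendsto_nhdsWithin_of_tendsto_nhds_of_eventually_within _ htto
      (Filter.Eventually.of_forall htmem)
  obtain ⟨xs, hxsC, φ, hφmono, hφto⟩ := hCcomp.tendsto_subseq
    (x := fun n => u (tseq n)) (fun n => huC _ (htmem n))
  have hφl : Tendsto (fun n => tseq (φ n)) atTop l := htl.comp hφmono.tendsto_atTop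
  -- q.eval xs = H ζ
  have hγto : Tendsto (fun t : ℝ => H (γ t)) l (𝓝 (H ζ)) := by
    have h1 : Tendsto γ l (𝓝 ζ) := by
      rw [← hγ1]
      exact (hγc.tendsto 1).mono_left nhdsWithin_le_nhds
    have h2 : ContinuousAt H ζ := hHc.continuousAt (isOpen_ball.mem_nhds hζball)
    exact h2.tendsto.comp h1
  have hqxs : q.eval xs = H ζ := by
    have h1 : Tendsto (fun n => q.eval (u (tseq (φ n)))) atTop (𝓝 (q.eval xs)) :=
      (q.continuous.tendsto xs).comp hφto
    have h2 : Tendsto (fun n => q.eval (u (tseq (φ n)))) atTop (𝓝 (H ζ)) := by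
      have heq : ∀ n, q.eval (u (tseq (φ n))) = H (γ (tseq (φ n))) :=
        fun n => hue _ (htmem _)
      rw [show (fun n => q.eval (u (tseq (φ n)))) = fun n => H (γ (tseq (φ n))) from
        funext heq]
      exact hγto.comp hφl
    exact tendsto_nhds_unique h1 h2
  obtain ⟨hinj, hballB, η, hηc, hηx, hηspec⟩ := huni xs hxsC
  -- convergence of the whole path to xs
  have hfreq2 : ∀ r, 0 < r → ∃ᶠ t in l, dist (u t) xs < r := by
    intro r hr
    have hev : ∀ᶠ n in atTop, dist (u (tseq (φ n))) xs < r := by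
      have := Metric.tendsto_nhds.1 hφto r hr
      exact this
    exact hφl.frequently (hev.frequently)
  have hconvδ : ∀ r, 0 < r → r ≤ δ → ∀ᶠ t in l, dist (u t) xs < r := by
    intro r hr hrδ
    by_contra hcon
    rw [Filter.not_eventually] at hcon
    -- construct crossing sequence
    have hv : ∀ n : ℕ, ∃ w, w ∈ Set.Ico (0:ℝ) 1 ∧ 1 - 1/(n+1) ≤ w ∧
        dist (u w) xs = 3/4 * r := by
      intro n
      have han : (1 - 1/(n+1:ℝ)) < 1 := by
        have : 0 < 1/(n+1:ℝ) := by positivity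
        linarith
      obtain ⟨α, hαd, hαmem⟩ := ((hfreq2 (r/2) (by linarith)).and_eventually
        ((Filter.eventually_mem_set.2 (hIcomem _ han)).and
          (Filter.eventually_mem_set.2 hImem))).exists
      have hα1 : α < 1 := hαmem.1.2
      obtain ⟨β, hβd, hβmem⟩ := (hcon.and_eventually
        ((Filter.eventually_mem_set.2 (hIcomem α hα1)).and
          (Filter.eventually_mem_set.2 hImem))).exists
      push_neg at hβd
      have hαβ : α ≤ β := hβmem.1.1
      have hIcc : Set.Icc α β ⊆ Set.Ico (0:ℝ) 1 := by
        intro t ht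
        exact ⟨le_trans hαmem.2.1 ht.1, lt_of_le_of_lt ht.2 hβmem.1.2⟩
      have hfc : ContinuousOn (fun t => dist (u t) xs) (Set.Icc α β) :=
        (continuous_id.dist continuous_const).comp_continuousOn (huc.mono hIcc)
      have hmid : 3/4 * r ∈ Set.Icc (dist (u α) xs) (dist (u β) xs) :=
        ⟨by linarith, by linarith⟩
      obtain ⟨w, hwI, hwd⟩ := intermediate_value_Icc hαβ hfc hmid
      exact ⟨w, hIcc hwI, le_trans hαmem.1.1 hwI.1, hwd⟩
    choose v hv1 hv2 hv3 using hv
    obtain ⟨ys, hysC, ψ, hψmono, hψto⟩ := hCcomp.tendsto_subseq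
      (x := fun n => u (v n)) (fun n => huC _ (hv1 n))
    have hvto : Tendsto (fun n => v (ψ n)) atTop (𝓝 1) := by
      refine tendsto_of_tendsto_of_tendsto_of_le_of_le (g := fun n => 1 - 1/(ψ n+1:ℝ))
        (h := fun _ => (1:ℝ)) ?_ tendsto_const_nhds (fun n => hv2 _)
        (fun n => le_of_lt (hv1 _).2)
      have h1 : Tendsto (fun n : ℕ => (ψ n : ℝ) + 1) atTop atTop :=
        tendsto_atTop_add_const_right _ 1
          (tendsto_natCast_atTop_atTop.comp hψmono.tendsto_atTop)
      have h2 : Tendsto (fun n : ℕ => 1/((ψ n:ℝ)+1)) atTop (𝓝 0) := by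
        simp only [one_div]
        exact Tendsto.comp tendsto_inv_atTop_zero h1
      have := h2.const_sub 1
      simpa using this
    have hvl : Tendsto (fun n => v (ψ n)) atTop l := by
      rw [hldef]
      exact tendsto_nhdsWithin_of_tendsto_nhds_of_eventually_within _ hvto
        (Filter.Eventually.of_forall (fun n => hv1 _))
    have hqys : q.eval ys = H ζ := by
      have h1 : Tendsto (fun n => q.eval (u (v (ψ n)))) atTop (𝓝 (q.eval ys)) :=
        (q.continuous.tendsto ys).comp hψto
      have h2 : Tendsto (fun n => q.eval (u (v (ψ n)))) atTop (𝓝 (H ζ)) := by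
        rw [show (fun n => q.eval (u (v (ψ n)))) = fun n => H (γ (v (ψ n))) from
          funext (fun n => hue _ (hv1 _))]
        exact hγto.comp hvl
      exact tendsto_nhds_unique h1 h2
    have hdys : dist ys xs = 3/4 * r := by
      have h1 : Tendsto (fun n => dist (u (v (ψ n))) xs) atTop (𝓝 (dist ys xs)) :=
        hψto.dist tendsto_const_nhds
      have h2 : (fun n => dist (u (v (ψ n))) xs) = fun _ => 3/4 * r :=
        funext fun n => hv3 _
      rw [h2] at h1
      exact tendsto_nhds_unique h1 tendsto_const_nhds
    have hyball : ys ∈ ball xs (2*δ) := by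
      rw [mem_ball, hdys]
      linarith
    have hxball : xs ∈ ball xs (2*δ) := mem_ball_self (by linarith)
    have heq : ys = xs := hinj hyball hxball (by
      show q.eval ys = q.eval xs
      rw [hqys, hqxs])
    rw [heq, dist_self] at hdys
    linarith
  have hconv : ∀ r, 0 < r → ∀ᶠ t in l, dist (u t) xs < r := by
    intro r hr
    rcases le_or_gt r δ with hrδ | hrδ
    · exact hconvδ r hr hrδ
    · exact (hconvδ δ hδ0 le_rfl).mono (fun t ht => lt_trans ht hrδ)
  -- the extension τ near ζ
  set τ : ℂ → ℂ := fun x => η (H x) with hτdef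
  have hball_sub : ball ζ ε₂ ⊆ closedBall c ((s+r₀)/2) := by
    intro x hx
    rw [mem_closedBall]
    have h1 := mem_ball.1 hx
    calc dist x c ≤ dist x ζ + dist ζ c := dist_triangle _ _ _
      _ ≤ ε₂ + s := by rw [hζc]; linarith
      _ ≤ (s+r₀)/2 := by linarith
  have hball_sub' : ball ζ ε₂ ⊆ ball c r₀ := by
    intro x hx
    have h := hball_sub hx
    rw [mem_closedBall] at h
    rw [mem_ball]
    have : (s+r₀)/2 < r₀ := by linarith
    linarith
  have hζcb : ζ ∈ closedBall c ((s+r₀)/2) := by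
    rw [mem_closedBall, hζc]; linarith
  have hHmaps : ∀ x ∈ ball ζ ε₂, H x ∈ ball (q.eval xs) ε := by
    intro x hx
    rw [hqxs, mem_ball]
    exact hε₂ x (hball_sub hx) ζ hζcb (mem_ball.1 hx)
  have hτc : ContinuousOn τ (ball ζ ε₂) := hηc.comp (hHc.mono hball_sub') hHmaps
  have hτe : ∀ x ∈ ball ζ ε₂, q.eval (τ x) = H x := fun x hx => (hηspec _ (hHmaps x hx)).1
  have hτball : ∀ x ∈ ball ζ ε₂, τ x ∈ ball xs (2*δ) := fun x hx => (hηspec _ (hHmaps x hx)).2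
  -- eventually the radial path is in the overlap and both lifts agree there
  have hγev : ∀ᶠ t in l, γ t ∈ ball ζ ε₂ ∩ ball c s := by
    set a₁ : ℝ := 1 - (min 1 (ε₂/s))/2 with ha₁def
    have hmin0 : 0 < min 1 (ε₂/s) := lt_min one_pos (by positivity)
    have ha₁ : a₁ < 1 := by rw [ha₁def]; linarith
    filter_upwards [hIcomem a₁ ha₁, hImem] with t ht htI
    refine ⟨?_, hγmem t htI⟩
    rw [mem_ball, hγζ, abs_of_nonneg (by linarith [htI.2])]
    have h1 : 1 - t ≤ (min 1 (ε₂/s))/2 := by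
      have := ht.1
      rw [ha₁def] at this
      linarith
    have h2 : (1-t)*s ≤ ((ε₂/s)/2)*s := by
      have hm : min 1 (ε₂/s) ≤ ε₂/s := min_le_right _ _
      nlinarith
    have h3 : ((ε₂/s)/2)*s = ε₂/2 := by
      field_simp
    rw [h3] at h2
    linarith
  have hagree_ev : ∀ᶠ t in l, σ (γ t) = τ (γ t) := by
    filter_upwards [hconv δ hδ0, hγev] with t htd htm
    have hσb : σ (γ t) ∈ ball xs (2*δ) := by
      rw [mem_ball]
      calc dist (σ (γ t)) xs = dist (u t) xs := rfl
        _ < δ := htd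
        _ < 2*δ := by linarith
    have hτb : τ (γ t) ∈ ball xs (2*δ) := hτball _ htm.1
    refine hinj hσb hτb ?_
    show q.eval (σ (γ t)) = q.eval (τ (γ t))
    rw [hσe _ htm.2, hτe _ htm.1]
  obtain ⟨t₀, hta, htm⟩ := (hagree_ev.and hγev).exists
  refine ⟨τ, hτc, hτe, ?_⟩
  have hW : IsOpen (ball ζ ε₂ ∩ ball c s) := isOpen_ball.inter isOpen_ball
  have hWc : IsPreconnected (ball ζ ε₂ ∩ ball c s) :=
    ((convex_ball _ _).inter (convex_ball _ _)).isPreconnected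
  exact lift_unique hcrit hpre hW hWc (H := H)
    (fun x hx => hHB x (hball_sub' hx.1))
    (hσc.mono inter_subset_right) (hτc.mono inter_subset_left)
    (fun x hx => hσe x hx.2) (fun x hx => hτe x hx.1) htm hta

/-- A lift on `ball c s` extends to a strictly larger ball. -/
lemma lift_extend {q : Polynomial ℂ} {B : Set ℂ} (hq2 : 2 ≤ q.natDegree) (hB : IsOpen B)
    (hcrit : ∀ z ∈ B, q.derivative.eval z ≠ 0)
    (hpre : ∀ z : ℂ, q.eval z ∈ B → z ∈ B)
    {c x₀ : ℂ} {r₀ s : ℝ} (hs0 : 0 < s) (hsr : s < r₀)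
    {H : ℂ → ℂ} (hHc : ContinuousOn H (ball c r₀)) (hHB : ∀ x ∈ ball c r₀, H x ∈ B)
    {σ : ℂ → ℂ} (hσc : ContinuousOn σ (ball c s)) (hσ0 : σ c = x₀)
    (hσe : ∀ x ∈ ball c s, q.eval (σ x) = H x) :
    ∃ ρ, s < ρ ∧ ρ ≤ r₀ ∧ ∃ σ' : ℂ → ℂ, ContinuousOn σ' (ball c ρ) ∧ σ' c = x₀ ∧
      ∀ x ∈ ball c ρ, q.eval (σ' x) = H x := by
  set s' : ℝ := (s + r₀)/2 with hs'def
  have hss' : s < s' := by rw [hs'def]; linarith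
  have hs'r : s' < r₀ := by rw [hs'def]; linarith
  have hcb : closedBall c s' ⊆ ball c r₀ := by
    intro x hx; rw [mem_closedBall] at hx; rw [mem_ball]; linarith
  set K : Set ℂ := H '' (closedBall c s') with hKdef
  have hKcomp : IsCompact K := (isCompact_closedBall c s').image_of_continuousOn (hHc.mono hcb)
  have hKB : K ⊆ B := by rintro y ⟨x, hx, rfl⟩; exact hHB x (hcb hx)
  set C : Set ℂ := (fun z => q.eval z) ⁻¹' K with hCdef
  have hCcomp : IsCompact C := poly_proper q hq2 hKcomp
  have hCB : C ⊆ B := fun z hz => hpre z (hKB hz)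
  have hCmem : ∀ x ∈ ball c s, σ x ∈ C := by
    intro x hx
    show q.eval (σ x) ∈ K
    rw [hσe x hx]
    refine ⟨x, ?_, rfl⟩
    rw [mem_closedBall]
    have := mem_ball.1 hx
    linarith
  obtain ⟨δ, hδ0, ε, hε0, huni⟩ := local_inv_uniform hB hcrit hCcomp hCB
  have hHK : ∃ ε₂' > 0, ∀ x ∈ closedBall c s', ∀ y ∈ closedBall c s',
      dist x y < ε₂' → dist (H x) (H y) < ε := by
    have huc := (isCompact_closedBall c s').uniformContinuousOn_of_continuous (hHc.mono hcb)
    rw [Metric.uniformContinuousOn_iff] at huc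
    obtain ⟨ε₂', h0, h⟩ := huc ε hε0
    exact ⟨ε₂', h0, fun x hx y hy hd => h x hx y hy hd⟩
  obtain ⟨ε₂', hε₂'0, hε₂'⟩ := hHK
  set ε₂ : ℝ := min ε₂' ((r₀ - s)/2) with hε₂def
  have hε₂0 : 0 < ε₂ := lt_min hε₂'0 (by linarith)
  have hε₂r : ε₂ ≤ (r₀ - s)/2 := min_le_right _ _
  have hε₂u : ∀ x ∈ closedBall c s', ∀ y ∈ closedBall c s',
      dist x y < ε₂ → dist (H x) (H y) < ε :=
    fun x hx y hy hd => hε₂' x hx y hy (lt_of_lt_of_le hd (min_le_left _ _))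
  have hpack0 : ∀ ζ ∈ sphere c s, ∃ τ : ℂ → ℂ, ContinuousOn τ (ball ζ ε₂) ∧
      (∀ x ∈ ball ζ ε₂, q.eval (τ x) = H x) ∧ EqOn σ τ (ball ζ ε₂ ∩ ball c s) :=
    fun ζ hζ => lift_boundary_point hcrit hpre hs0 hsr hHc hHB hσc hσe hCcomp hCB hCmem
      hδ0 hε0 huni hε₂0 hε₂r hε₂u hζ
  choose! τf hτfc hτfe hτfagree using hpack0
  have hbsub : ∀ ζ ∈ sphere c s, ball ζ ε₂ ⊆ ball c r₀ := by
    intro ζ hζ x hx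
    have h1 := mem_ball.1 hx
    have h2 : dist ζ c = s := mem_sphere.1 hζ
    rw [mem_ball]
    calc dist x c ≤ dist x ζ + dist ζ c := dist_triangle _ _ _
      _ < ε₂ + s := by rw [h2]; linarith
      _ ≤ (r₀ - s)/2 + s := by linarith
      _ < r₀ := by linarith
  -- pairwise agreement of boundary lifts
  have hpair : ∀ ζ₁ ∈ sphere c s, ∀ ζ₂ ∈ sphere c s,
      EqOn (τf ζ₁) (τf ζ₂) (ball ζ₁ ε₂ ∩ ball ζ₂ ε₂) := by
    intro ζ₁ hζ₁ ζ₂ hζ₂ y hy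
    have hd12 : dist ζ₁ ζ₂ < 2 * ε₂ := by
      have h1 : dist y ζ₁ < ε₂ := mem_ball.1 hy.1
      have h2 : dist y ζ₂ < ε₂ := mem_ball.1 hy.2
      calc dist ζ₁ ζ₂ ≤ dist ζ₁ y + dist y ζ₂ := dist_triangle _ _ _
        _ < ε₂ + ε₂ := by rw [dist_comm ζ₁ y]; linarith
        _ = 2 * ε₂ := by ring
    set μ : ℂ := (ζ₁ + ζ₂)/2 with hμdef
    have hμ1 : dist μ ζ₁ = dist ζ₁ ζ₂ / 2 := by
      rw [dist_eq_norm, dist_eq_norm]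
      rw [show μ - ζ₁ = (ζ₂ - ζ₁)/2 by rw [hμdef]; ring]
      rw [norm_div, norm_sub_rev]
      norm_num
    have hμ2 : dist μ ζ₂ = dist ζ₁ ζ₂ / 2 := by
      rw [dist_eq_norm, dist_eq_norm]
      rw [show μ - ζ₂ = (ζ₁ - ζ₂)/2 by rw [hμdef]; ring]
      rw [norm_div]
      norm_num
    have hμc : dist μ c ≤ s := by
      have h1 : dist ζ₁ c = s := mem_sphere.1 hζ₁
      have h2 : dist ζ₂ c = s := mem_sphere.1 hζ₂
      rw [dist_eq_norm] at h1 h2 ⊢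
      rw [show μ - c = ((ζ₁ - c) + (ζ₂ - c))/2 by rw [hμdef]; ring]
      calc ‖((ζ₁ - c) + (ζ₂ - c))/2‖ = ‖(ζ₁ - c) + (ζ₂ - c)‖/2 := by
            rw [norm_div]; norm_num
        _ ≤ (‖ζ₁ - c‖ + ‖ζ₂ - c‖)/2 := by linarith [norm_add_le (ζ₁ - c) (ζ₂ - c)]
        _ = s := by rw [h1, h2]; ring
    set gap : ℝ := ε₂ - dist ζ₁ ζ₂ / 2 with hgapdef
    have hgap0 : 0 < gap := by rw [hgapdef]; linarith
    set θ : ℝ := min (1/2) (gap/(2*(s+1))) with hθdef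
    have hθ0 : 0 < θ := lt_min (by norm_num) (by positivity)
    have hθ1 : θ < 1 := lt_of_le_of_lt (min_le_left _ _) (by norm_num)
    have hθs : θ * s ≤ gap/2 := by
      have h1 : θ ≤ gap/(2*(s+1)) := min_le_right _ _
      have h2 : θ * s ≤ (gap/(2*(s+1))) * s := by nlinarith
      have h3 : (gap/(2*(s+1))) * s ≤ gap/2 := by
        rw [div_mul_eq_mul_div, div_le_div_iff₀ (by positivity) (by norm_num)]
        nlinarith
      linarith
    set w : ℂ := c + ((1 - θ : ℝ):ℂ) * (μ - c) with hwdef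
    have hwμ : dist w μ ≤ θ * s := by
      rw [dist_eq_norm]
      rw [show w - μ = -(((θ:ℝ):ℂ) * (μ - c)) by rw [hwdef]; push_cast; ring]
      rw [norm_neg, norm_mul, Complex.norm_real]
      rw [Real.norm_eq_abs, abs_of_pos hθ0]
      have : ‖μ - c‖ ≤ s := by rw [← dist_eq_norm]; exact hμc
      nlinarith
    have hwc : dist w c < s := by
      rw [dist_eq_norm]
      rw [show w - c = ((1 - θ : ℝ):ℂ) * (μ - c) by rw [hwdef]; ring]
      rw [norm_mul, Complex.norm_real, Real.norm_eq_abs, abs_of_pos (by linarith)]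
      have h1 : ‖μ - c‖ ≤ s := by rw [← dist_eq_norm]; exact hμc
      nlinarith
    have hwζ₁ : dist w ζ₁ < ε₂ := by
      calc dist w ζ₁ ≤ dist w μ + dist μ ζ₁ := dist_triangle _ _ _
        _ ≤ θ * s + dist ζ₁ ζ₂ / 2 := by rw [hμ1]; linarith [hwμ]
        _ ≤ gap/2 + dist ζ₁ ζ₂ / 2 := by linarith [hθs]
        _ < gap + dist ζ₁ ζ₂ / 2 := by linarith
        _ = ε₂ := by rw [hgapdef]; ring
    have hwζ₂ : dist w ζ₂ < ε₂ := by
      calc dist w ζ₂ ≤ dist w μ + dist μ ζ₂ := dist_triangle _ _ _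
        _ ≤ θ * s + dist ζ₁ ζ₂ / 2 := by rw [hμ2]; linarith [hwμ]
        _ ≤ gap/2 + dist ζ₁ ζ₂ / 2 := by linarith [hθs]
        _ < gap + dist ζ₁ ζ₂ / 2 := by linarith
        _ = ε₂ := by rw [hgapdef]; ring
    have hag1 : σ w = τf ζ₁ w := hτfagree ζ₁ hζ₁ ⟨mem_ball.2 hwζ₁, mem_ball.2 hwc⟩
    have hag2 : σ w = τf ζ₂ w := hτfagree ζ₂ hζ₂ ⟨mem_ball.2 hwζ₂, mem_ball.2 hwc⟩
    exact lift_unique hcrit hpre (isOpen_ball.inter isOpen_ball)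
      ((convex_ball _ _).inter (convex_ball _ _)).isPreconnected
      (H := H) (fun x hx => hHB x (hbsub ζ₁ hζ₁ hx.1))
      ((hτfc ζ₁ hζ₁).mono inter_subset_left)
      ((hτfc ζ₂ hζ₂).mono inter_subset_right)
      (fun x hx => hτfe ζ₁ hζ₁ x hx.1) (fun x hx => hτfe ζ₂ hζ₂ x hx.2)
      (x₀ := w) ⟨mem_ball.2 hwζ₁, mem_ball.2 hwζ₂⟩ (by rw [← hag1, ← hag2]) hy
  -- the glued extension
  set δ₃ : ℝ := ε₂/2 with hδ₃def
  have hδ₃0 : 0 < δ₃ := by positivity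
  refine ⟨s + δ₃, by linarith, by rw [hδ₃def]; linarith, ?_⟩
  set ζof : ℂ → ℂ := fun x => c + ((s / dist x c : ℝ) : ℂ) * (x - c) with hζofdef
  have hζofsphere : ∀ x : ℂ, s ≤ dist x c → ζof x ∈ sphere c s := by
    intro x hx
    have hd0 : 0 < dist x c := lt_of_lt_of_le hs0 hx
    rw [mem_sphere, dist_eq_norm]
    rw [show ζof x - c = ((s / dist x c : ℝ) : ℂ) * (x - c) by rw [hζofdef]; ring]
    rw [norm_mul, Complex.norm_real, Real.norm_eq_abs, abs_of_pos (by positivity)]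
    rw [← dist_eq_norm]
    field_simp
  have hζofdist : ∀ x : ℂ, s ≤ dist x c → dist x (ζof x) = dist x c - s := by
    intro x hx
    have hd0 : 0 < dist x c := lt_of_lt_of_le hs0 hx
    rw [dist_eq_norm]
    rw [show x - ζof x = ((1 - s / dist x c : ℝ) : ℂ) * (x - c) by rw [hζofdef]; push_cast; ring]
    rw [norm_mul, Complex.norm_real, Real.norm_eq_abs]
    rw [abs_of_nonneg (by
      have : s / dist x c ≤ 1 := by rw [div_le_one hd0]; exact hx
      linarith)]
    rw [← dist_eq_norm]
    field_simp
  set σ' : ℂ → ℂ := fun x => if dist x c < s then σ x else τf (ζof x) x with hσ'def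
  have hσ'in : ∀ x, dist x c < s → σ' x = σ x := by
    intro x hx
    show (if dist x c < s then σ x else τf (ζof x) x) = σ x
    rw [if_pos hx]
  have hσ'out : ∀ x, ¬(dist x c < s) → σ' x = τf (ζof x) x := by
    intro x hx
    show (if dist x c < s then σ x else τf (ζof x) x) = τf (ζof x) x
    rw [if_neg hx]
  have hmemζ : ∀ x, s ≤ dist x c → dist x c < s + δ₃ + δ₃ → x ∈ ball (ζof x) ε₂ := by
    intro x h1 h2
    rw [mem_ball, hζofdist x h1]
    rw [hδ₃def] at h2
    linarith
  refine ⟨σ', ?_, ?_, ?_⟩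
  · -- continuity
    intro x₁ hx₁
    have hx₁' := mem_ball.1 hx₁
    rcases lt_or_ge (dist x₁ c) s with hlt | hge
    · have hev : ∀ᶠ y in 𝓝 x₁, σ' y = σ y := by
        have hball : ball x₁ (s - dist x₁ c) ∈ 𝓝 x₁ := ball_mem_nhds _ (by linarith)
        filter_upwards [hball] with y hy
        refine hσ'in y ?_
        have h1 := mem_ball.1 hy
        calc dist y c ≤ dist y x₁ + dist x₁ c := dist_triangle _ _ _
          _ < (s - dist x₁ c) + dist x₁ c := by linarith
          _ = s := by ring
      have hc1 : ContinuousAt σ x₁ :=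
        hσc.continuousAt (isOpen_ball.mem_nhds (mem_ball.2 hlt))
      exact (hc1.congr_of_eventuallyEq hev).continuousWithinAt
    · set ζ₁ : ℂ := ζof x₁ with hζ₁def
      have hζ₁s : ζ₁ ∈ sphere c s := hζofsphere x₁ hge
      have hx₁ζ : dist x₁ ζ₁ < δ₃ := by
        rw [hζ₁def, hζofdist x₁ hge]; linarith
      have hx₁ζball : x₁ ∈ ball ζ₁ ε₂ := by
        rw [mem_ball]
        rw [hδ₃def] at hx₁ζ
        linarith
      have hev : σ' =ᶠ[𝓝 x₁] τf ζ₁ := by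
        have hball : ball x₁ (ε₂/8) ∈ 𝓝 x₁ := ball_mem_nhds _ (by positivity)
        filter_upwards [hball] with y hy
        have hyx₁ := mem_ball.1 hy
        have hyζ₁ : y ∈ ball ζ₁ ε₂ := by
          rw [mem_ball]
          calc dist y ζ₁ ≤ dist y x₁ + dist x₁ ζ₁ := dist_triangle _ _ _
            _ < ε₂/8 + δ₃ := by linarith
            _ < ε₂ := by rw [hδ₃def]; linarith
        rcases lt_or_ge (dist y c) s with hy1 | hy2
        · rw [hσ'in y hy1]
          exact hτfagree ζ₁ hζ₁s ⟨hyζ₁, mem_ball.2 hy1⟩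
        · rw [hσ'out y (not_lt.2 hy2)]
          have hyc : dist y c < s + δ₃ + δ₃ := by
            calc dist y c ≤ dist y x₁ + dist x₁ c := dist_triangle _ _ _
              _ < ε₂/8 + (s + δ₃) := by linarith
              _ ≤ s + δ₃ + δ₃ := by rw [hδ₃def]; linarith
          have hyζy : y ∈ ball (ζof y) ε₂ := hmemζ y hy2 hyc
          exact hpair (ζof y) (hζofsphere y hy2) ζ₁ hζ₁s ⟨hyζy, hyζ₁⟩
      have hc1 : ContinuousAt (τf ζ₁) x₁ :=
        (hτfc ζ₁ hζ₁s).continuousAt (isOpen_ball.mem_nhds hx₁ζball)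
      exact (hc1.congr_of_eventuallyEq hev).continuousWithinAt
  · rw [hσ'in c (by rw [dist_self]; exact hs0)]
    exact hσ0
  · intro x hx
    have hx' := mem_ball.1 hx
    rcases lt_or_ge (dist x c) s with hlt | hge
    · rw [hσ'in x hlt]
      exact hσe x (mem_ball.2 hlt)
    · rw [hσ'out x (not_lt.2 hge)]
      have hxζ : x ∈ ball (ζof x) ε₂ := hmemζ x hge (by linarith)
      exact hτfe (ζof x) (hζofsphere x hge) x hxζ

/-- Existence of global lifts on a disk through a polynomial covering the set `B`. -/
lemma lift_exists {q : Polynomial ℂ} {B : Set ℂ} (hq2 : 2 ≤ q.natDegree) (hB : IsOpen B)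
    (hcrit : ∀ z ∈ B, q.derivative.eval z ≠ 0)
    (hpre : ∀ z : ℂ, q.eval z ∈ B → z ∈ B)
    {c x₀ : ℂ} {r₀ : ℝ} (hr₀ : 0 < r₀) {H : ℂ → ℂ}
    (hHc : ContinuousOn H (ball c r₀)) (hHB : ∀ x ∈ ball c r₀, H x ∈ B)
    (hx₀ : q.eval x₀ = H c) :
    ∃ σ : ℂ → ℂ, ContinuousOn σ (ball c r₀) ∧ σ c = x₀ ∧
      ∀ x ∈ ball c r₀, q.eval (σ x) = H x := by
  classical
  set G : Set ℝ := {ρ | 0 < ρ ∧ ρ ≤ r₀ ∧ ∃ σ : ℂ → ℂ, ContinuousOn σ (ball c ρ) ∧ σ c = x₀ ∧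
      ∀ x ∈ ball c ρ, q.eval (σ x) = H x} with hGdef
  have hx₀B : x₀ ∈ B := hpre _ (by rw [hx₀]; exact hHB c (mem_ball_self hr₀))
  have hbase : ∃ ρ ∈ G, 0 < ρ := by
    obtain ⟨δ, hδ0, ε, hε0, huni⟩ := local_inv_uniform hB hcrit
      (isCompact_singleton (x := x₀)) (singleton_subset_iff.2 hx₀B)
    obtain ⟨-, -, η, hηc, hηx, hηs⟩ := huni x₀ rfl
    have hHct : ContinuousAt H c := hHc.continuousAt (isOpen_ball.mem_nhds (mem_ball_self hr₀))
    have hev : ∀ᶠ x in 𝓝 c, H x ∈ ball (q.eval x₀) ε := by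
      rw [hx₀]
      exact hHct (ball_mem_nhds _ hε0)
    obtain ⟨ρ', hρ'0, hρ'⟩ := Metric.eventually_nhds_iff_ball.1 hev
    refine ⟨min ρ' r₀, ⟨lt_min hρ'0 hr₀, min_le_right _ _, η ∘ H, ?_, ?_, ?_⟩,
      lt_min hρ'0 hr₀⟩
    · refine hηc.comp (hHc.mono (ball_subset_ball (min_le_right _ _))) ?_
      intro x hx
      exact hρ' x (ball_subset_ball (min_le_left _ _) hx)
    · show η (H c) = x₀
      rw [← hx₀, hηx]
    · intro x hx
      exact (hηs _ (hρ' x (ball_subset_ball (min_le_left _ _) hx))).1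
  obtain ⟨ρ₀, hρ₀G, hρ₀pos⟩ := hbase
  have hGbdd : BddAbove G := ⟨r₀, fun ρ hρ => hρ.2.1⟩
  have hGne : G.Nonempty := ⟨ρ₀, hρ₀G⟩
  set S : ℝ := sSup G with hSdef
  have hS0 : 0 < S := lt_of_lt_of_le hρ₀pos (le_csSup hGbdd hρ₀G)
  have hSr : S ≤ r₀ := csSup_le hGne (fun ρ hρ => hρ.2.1)
  have hmono : ∀ ρ ∈ G, ∀ ρ'' , 0 < ρ'' → ρ'' ≤ ρ → ρ'' ∈ G := by
    rintro ρ ⟨h1, h2, σ, hσ1, hσ2, hσ3⟩ ρ'' h3 h4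
    exact ⟨h3, le_trans h4 h2, σ, hσ1.mono (ball_subset_ball h4), hσ2,
      fun x hx => hσ3 x (ball_subset_ball h4 hx)⟩
  have hallG : ∀ ρ, 0 < ρ → ρ < S → ρ ∈ G := by
    intro ρ h1 h2
    obtain ⟨ρ'', hρ''G, h3⟩ := exists_lt_of_lt_csSup hGne h2
    exact hmono ρ'' hρ''G ρ h1 (le_of_lt h3)
  set F : ℝ → (ℂ → ℂ) := fun ρ => if h : ρ ∈ G then h.2.2.choose else id with hFdef
  have hFc : ∀ ρ, ∀ h : ρ ∈ G, ContinuousOn (F ρ) (ball c ρ) ∧ (F ρ) c = x₀ ∧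
      ∀ x ∈ ball c ρ, q.eval (F ρ x) = H x := by
    intro ρ h
    have : F ρ = h.2.2.choose := by rw [hFdef]; simp only [dif_pos h]
    rw [this]
    exact h.2.2.choose_spec
  have hF2 : ∀ ρ₁, ∀ h₁ : ρ₁ ∈ G, ∀ ρ₂, ∀ h₂ : ρ₂ ∈ G,
      EqOn (F ρ₁) (F ρ₂) (ball c (min ρ₁ ρ₂)) := by
    intro ρ₁ h₁ ρ₂ h₂
    have h0 : (0:ℝ) < min ρ₁ ρ₂ := lt_min h₁.1 h₂.1
    have hsub : ball c (min ρ₁ ρ₂) ⊆ ball c r₀ :=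
      ball_subset_ball (le_trans (min_le_left _ _) h₁.2.1)
    exact lift_unique hcrit hpre isOpen_ball (convex_ball _ _).isPreconnected
      (H := H) (fun x hx => hHB x (hsub hx))
      ((hFc ρ₁ h₁).1.mono (ball_subset_ball (min_le_left _ _)))
      ((hFc ρ₂ h₂).1.mono (ball_subset_ball (min_le_right _ _)))
      (fun x hx => (hFc ρ₁ h₁).2.2 x (ball_subset_ball (min_le_left _ _) hx))
      (fun x hx => (hFc ρ₂ h₂).2.2 x (ball_subset_ball (min_le_right _ _) hx))
      (x₀ := c) (mem_ball_self h0) (by rw [(hFc ρ₁ h₁).2.1, (hFc ρ₂ h₂).2.1])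
  -- the glued lift on ball c S
  have hSG : ∃ σ : ℂ → ℂ, ContinuousOn σ (ball c S) ∧ σ c = x₀ ∧
      ∀ x ∈ ball c S, q.eval (σ x) = H x := by
    set σS : ℂ → ℂ := fun x => F ((dist x c + S)/2) x with hσSdef
    have hρmem : ∀ x : ℂ, dist x c < S → (dist x c + S)/2 ∈ G := by
      intro x hx
      refine hallG _ ?_ ?_
      · have := dist_nonneg (x := x) (y := c)
        linarith
      · linarith
    have hρball : ∀ x : ℂ, dist x c < S → x ∈ ball c ((dist x c + S)/2) := by
      intro x hx
      rw [mem_ball]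
      linarith
    refine ⟨σS, ?_, ?_, ?_⟩
    · intro x₁ hx₁
      have hd₁ := mem_ball.1 hx₁
      set ρ₁ : ℝ := (dist x₁ c + S)/2 with hρ₁def
      have hρ₁G : ρ₁ ∈ G := hρmem x₁ hd₁
      set ν : ℝ := (S - dist x₁ c)/4 with hνdef
      have hν0 : 0 < ν := by rw [hνdef]; linarith
      have hev : σS =ᶠ[𝓝 x₁] F ρ₁ := by
        filter_upwards [ball_mem_nhds x₁ hν0] with y hy
        have hyx₁ := mem_ball.1 hy
        have hyc : dist y c < S := by
          calc dist y c ≤ dist y x₁ + dist x₁ c := dist_triangle _ _ _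
            _ < ν + dist x₁ c := by linarith
            _ < S := by rw [hνdef]; linarith
        have hyρ₁ : dist y c < ρ₁ := by
          calc dist y c ≤ dist y x₁ + dist x₁ c := dist_triangle _ _ _
            _ < ν + dist x₁ c := by linarith
            _ < ρ₁ := by rw [hνdef, hρ₁def]; linarith
        show F ((dist y c + S)/2) y = F ρ₁ y
        refine hF2 _ (hρmem y hyc) ρ₁ hρ₁G ?_
        rw [mem_ball, lt_min_iff]
        exact ⟨by linarith, hyρ₁⟩
      have hc1 : ContinuousAt (F ρ₁) x₁ :=
        (hFc ρ₁ hρ₁G).1.continuousAt (isOpen_ball.mem_nhds (by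
          rw [mem_ball]
          rw [hρ₁def]
          linarith))
      exact (hc1.congr_of_eventuallyEq hev).continuousWithinAt
    · show F ((dist c c + S)/2) c = x₀
      have h1 : (dist c c + S)/2 = S/2 := by rw [dist_self]; ring
      rw [h1]
      exact (hFc (S/2) (hallG _ (by linarith) (by linarith))).2.1
    · intro x hx
      have hd := mem_ball.1 hx
      exact (hFc _ (hρmem x hd)).2.2 x (hρball x hd)
  obtain ⟨σS, hσS1, hσS2, hσS3⟩ := hSG
  rcases eq_or_lt_of_le hSr with heq | hlt
  · exact ⟨σS, by rw [← heq]; exact hσS1, hσS2, fun x hx => hσS3 x (by rw [heq]; exact hx)⟩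
  · exfalso
    obtain ⟨ρ, hρS, hρr, σ', hσ'1, hσ'2, hσ'3⟩ :=
      lift_extend hq2 hB hcrit hpre hS0 hlt hHc hHB hσS1 hσS2 hσS3
    have : ρ ∈ G := ⟨lt_trans hS0 hρS, hρr, σ', hσ'1, hσ'2, hσ'3⟩
    have := le_csSup hGbdd this
    linarith

/-- Continuous lifts through a critical-point-free polynomial are holomorphic. -/
lemma lift_differentiableOn {q : Polynomial ℂ} {B : Set ℂ}
    (hcrit : ∀ z ∈ B, q.derivative.eval z ≠ 0)
    (hpre : ∀ z : ℂ, q.eval z ∈ B → z ∈ B)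
    {S : Set ℂ} (hS : IsOpen S) {H σ : ℂ → ℂ} (hσc : ContinuousOn σ S)
    (hH : ∀ x ∈ S, H x ∈ B) (hHd : DifferentiableOn ℂ H S)
    (hσe : ∀ x ∈ S, q.eval (σ x) = H x) :
    DifferentiableOn ℂ σ S := by
  intro x₁ hx₁
  have hyB : σ x₁ ∈ B := hpre _ (by rw [hσe x₁ hx₁]; exact hH x₁ hx₁)
  have hsd := q.hasStrictDerivAt (σ x₁)
  have hne := hcrit _ hyB
  have hF := hsd.hasStrictFDerivAt_equiv hne
  have hlinv := hF.eventually_left_inverse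
  have hc1 : ContinuousAt σ x₁ := hσc.continuousAt (hS.mem_nhds hx₁)
  have hev : ∀ᶠ y in 𝓝 x₁, hF.localInverse _ _ _ (q.eval (σ y)) = σ y := hc1.eventually hlinv
  have hev2 : σ =ᶠ[𝓝 x₁] fun y => hF.localInverse _ _ _ (H y) := by
    have hevS : ∀ᶠ y in 𝓝 x₁, y ∈ S := hS.mem_nhds hx₁
    filter_upwards [hev, hevS] with y h1 h2
    rw [← h1, hσe y h2]
  have hinvd : DifferentiableAt ℂ (hF.localInverse _ _ _) (H x₁) := by
    have h := hF.to_localInverse.differentiableAt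
    rwa [hσe x₁ hx₁] at h
  have hHd1 : DifferentiableAt ℂ H x₁ := (hHd x₁ hx₁).differentiableAt (hS.mem_nhds hx₁)
  have hd : DifferentiableAt ℂ (fun y => hF.localInverse _ _ _ (H y)) x₁ :=
    DifferentiableAt.comp x₁ hinvd hHd1
  exact (hev2.differentiableAt_iff.2 hd).differentiableWithinAt

/-- An attracting (or superattracting) fixed point of a polynomial of degree at least two
attracts a critical point. -/
lemma crit_in_basin {q : Polynomial ℂ} (hq2 : 2 ≤ q.natDegree) {z₀ : ℂ}
    (hfix : q.eval z₀ = z₀) (hattr : ‖q.derivative.eval z₀‖ < 1) :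
    ∃ w : ℂ, q.derivative.eval w = 0 ∧
      Tendsto (fun n => (fun z => q.eval z)^[n] w) atTop (𝓝 z₀) := by
  by_cases h0 : q.derivative.eval z₀ = 0
  · refine ⟨z₀, h0, ?_⟩
    have h1 : ∀ n, (fun z => q.eval z)^[n] z₀ = z₀ :=
      fun n => Function.iterate_fixed hfix n
    simp only [h1]
    exact tendsto_const_nhds
  by_contra hcon
  push_neg at hcon
  set Q : ℂ → ℂ := fun z => q.eval z with hQdef
  set Bas : Set ℂ := {z | Tendsto (fun n => Q^[n] z) atTop (𝓝 z₀)} with hBdef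
  have hcrit : ∀ z ∈ Bas, q.derivative.eval z ≠ 0 := fun z hz hz0 => hcon z hz0 hz
  set lam : ℝ := ‖q.derivative.eval z₀‖ with hlamdef
  have hlam0 : 0 < lam := norm_pos_iff.2 h0
  set κ : ℝ := (1 + lam)/2 with hκdef
  have hκ0 : 0 < κ := by rw [hκdef]; linarith
  have hκ1 : κ < 1 := by rw [hκdef]; linarith
  have hlamκ : lam < κ := by rw [hκdef]; linarith
  -- local contraction
  obtain ⟨r₀, hr₀0, hr₀⟩ : ∃ r₀ > 0, ∀ x ∈ closedBall z₀ r₀, dist (Q x) z₀ ≤ κ * dist x z₀ := by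
    have hcont : ContinuousAt (fun z => ‖q.derivative.eval z‖) z₀ :=
      (q.derivative.continuous.norm).continuousAt
    have hev : ∀ᶠ z in 𝓝 z₀, ‖q.derivative.eval z‖ < κ := by
      have := hcont (Iio_mem_nhds hlamκ)
      exact this
    obtain ⟨r', hr'0, hr'⟩ := Metric.eventually_nhds_iff_ball.1 hev
    refine ⟨r'/2, by linarith, fun x hx => ?_⟩
    have hcb : closedBall z₀ (r'/2) ⊆ ball z₀ r' := by
      intro y hy
      rw [mem_closedBall] at hy
      rw [mem_ball]
      linarith
    have hmv := Convex.norm_image_sub_le_of_norm_hasDerivWithin_le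
      (f := Q) (f' := fun z => q.derivative.eval z) (s := closedBall z₀ (r'/2)) (C := κ)
      (fun y _ => (q.hasDerivAt y).hasDerivWithinAt)
      (fun y hy => le_of_lt (hr' y (hcb hy))) (convex_closedBall _ _)
      (mem_closedBall_self (by linarith)) hx
    calc dist (Q x) z₀ = ‖Q x - Q z₀‖ := by
          rw [dist_eq_norm, show Q z₀ = z₀ from hfix]
      _ ≤ κ * ‖x - z₀‖ := hmv
      _ = κ * dist x z₀ := by rw [dist_eq_norm]
  -- the closed ball is in the basin
  have horbit : ∀ x ∈ closedBall z₀ r₀, ∀ n : ℕ,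
      Q^[n] x ∈ closedBall z₀ r₀ ∧ dist (Q^[n] x) z₀ ≤ κ^n * dist x z₀ := by
    intro x hx n
    induction n with
    | zero => exact ⟨hx, by simp⟩
    | succ n ih =>
      have h1 : Q^[n+1] x = Q (Q^[n] x) := Function.iterate_succ_apply' Q n x
      have h2 : dist (Q^[n+1] x) z₀ ≤ κ * dist (Q^[n] x) z₀ := by
        rw [h1]; exact hr₀ _ ih.1
      have h3 : dist (Q^[n+1] x) z₀ ≤ κ^(n+1) * dist x z₀ := by
        calc dist (Q^[n+1] x) z₀ ≤ κ * dist (Q^[n] x) z₀ := h2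
          _ ≤ κ * (κ^n * dist x z₀) := by nlinarith [ih.2]
          _ = κ^(n+1) * dist x z₀ := by ring
      refine ⟨?_, h3⟩
      rw [mem_closedBall]
      have h4 : κ^(n+1) ≤ 1 := pow_le_one₀ (le_of_lt hκ0) (le_of_lt hκ1)
      have h5 := mem_closedBall.1 hx
      calc dist (Q^[n+1] x) z₀ ≤ κ^(n+1) * dist x z₀ := h3
        _ ≤ 1 * r₀ := by nlinarith [dist_nonneg (x := x) (y := z₀)]
        _ = r₀ := one_mul _
  have hball_bas : closedBall z₀ r₀ ⊆ Bas := by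
    intro x hx
    show Tendsto (fun n => Q^[n] x) atTop (𝓝 z₀)
    rw [tendsto_iff_dist_tendsto_zero]
    refine squeeze_zero (fun n => dist_nonneg) (fun n => (horbit x hx n).2) ?_
    have h1 : Tendsto (fun n : ℕ => κ^n) atTop (𝓝 0) :=
      tendsto_pow_atTop_nhds_zero_of_lt_one (le_of_lt hκ0) hκ1
    have := h1.mul_const (dist x z₀)
    simpa using this
  have hz₀Bas : z₀ ∈ Bas := hball_bas (mem_closedBall_self (le_of_lt hr₀0))
  have hopen : IsOpen Bas := by
    rw [isOpen_iff_mem_nhds]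
    intro x hx
    have hx' : Tendsto (fun n => Q^[n] x) atTop (𝓝 z₀) := hx
    have hx'' : ∀ᶠ n in atTop, Q^[n] x ∈ ball z₀ r₀ := hx' (ball_mem_nhds _ hr₀0)
    obtain ⟨N, hN⟩ := hx''.exists
    have hcont : Continuous (Q^[N]) := q.continuous.iterate N
    have hpre' : (Q^[N]) ⁻¹' (ball z₀ r₀) ∈ 𝓝 x :=
      hcont.continuousAt.preimage_mem_nhds (isOpen_ball.mem_nhds hN)
    filter_upwards [hpre'] with y hy
    have h1 : Tendsto (fun n => Q^[n] (Q^[N] y)) atTop (𝓝 z₀) :=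
      hball_bas (ball_subset_closedBall hy)
    have h2 : Tendsto (fun n => Q^[n + N] y) atTop (𝓝 z₀) := by
      refine h1.congr fun n => ?_
      rw [← Function.iterate_add_apply]
    exact (tendsto_add_atTop_iff_nat N).1 h2
  have hpre : ∀ z : ℂ, Q z ∈ Bas → z ∈ Bas := by
    intro z hz
    have h1 : Tendsto (fun n => Q^[n] (Q z)) atTop (𝓝 z₀) := hz
    have h2 : Tendsto (fun n => Q^[n + 1] z) atTop (𝓝 z₀) := by
      refine h1.congr fun n => ?_
      rw [← Function.iterate_succ_apply]
    exact (tendsto_add_atTop_iff_nat 1).1 h2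
  -- boundedness of the basin
  obtain ⟨R, hR1, hR⟩ := poly_growth q hq2
  have hbdd : ∀ z ∈ Bas, ‖z‖ < R := by
    intro z hz
    by_contra hge
    push_neg at hge
    have hiter : ∀ n : ℕ, R ≤ ‖Q^[n] z‖ ∧ 2^n * ‖z‖ ≤ ‖Q^[n] z‖ := by
      intro n
      induction n with
      | zero => exact ⟨hge, by simp⟩
      | succ n ih =>
        have h1 : Q^[n+1] z = Q (Q^[n] z) := Function.iterate_succ_apply' Q n z
        have h2 : 2 * ‖Q^[n] z‖ ≤ ‖Q (Q^[n] z)‖ := hR _ ih.1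
        constructor
        · rw [h1]
          have : 2 * R ≤ 2 * ‖Q^[n] z‖ := by linarith [ih.1]
          linarith
        · rw [h1, pow_succ]
          calc 2^n * 2 * ‖z‖ = 2 * (2^n * ‖z‖) := by ring
            _ ≤ 2 * ‖Q^[n] z‖ := by linarith [ih.2]
            _ ≤ ‖Q (Q^[n] z)‖ := h2
    have hz' : Tendsto (fun n => Q^[n] z) atTop (𝓝 z₀) := hz
    have hbd : ∀ᶠ n in atTop, ‖Q^[n] z‖ ≤ ‖z₀‖ + 1 := by
      have := hz' (Metric.closedBall_mem_nhds z₀ one_pos)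
      filter_upwards [this] with n hn
      have := mem_closedBall.1 hn
      calc ‖Q^[n] z‖ = ‖(Q^[n] z - z₀) + z₀‖ := by ring_nf
        _ ≤ ‖Q^[n] z - z₀‖ + ‖z₀‖ := norm_add_le _ _
        _ ≤ 1 + ‖z₀‖ := by rw [dist_eq_norm] at this; linarith
        _ = ‖z₀‖ + 1 := by ring
    have hzpos : (0:ℝ) < ‖z‖ := by linarith
    have hgrow : Tendsto (fun n : ℕ => 2^n * ‖z‖) atTop atTop := by
      refine Tendsto.atTop_mul_const hzpos ?_
      exact tendsto_pow_atTop_atTop_of_one_lt (by norm_num)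
    obtain ⟨n, hn1, hn2⟩ := ((hgrow.eventually_gt_atTop (‖z₀‖ + 1)).and hbd).exists
    have := (hiter n).2
    linarith
  -- inverse branches on the ball
  set P : (ℂ → ℂ) → Prop := fun g => ContinuousOn g (ball z₀ r₀) ∧
    DifferentiableOn ℂ g (ball z₀ r₀) ∧ g z₀ = z₀ ∧ ∀ x ∈ ball z₀ r₀, g x ∈ Bas with hPdef
  have hstep : ∀ g : ℂ → ℂ, P g → ∃ g' : ℂ → ℂ, P g' ∧
      ∀ x ∈ ball z₀ r₀, Q (g' x) = g x := by
    rintro g ⟨hg1, hg2, hg3, hg4⟩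
    obtain ⟨σ, hσ1, hσ2, hσ3⟩ := lift_exists hq2 hopen hcrit hpre hr₀0 hg1 hg4
      (c := z₀) (x₀ := z₀) (by rw [hg3]; exact hfix)
    refine ⟨σ, ⟨hσ1, lift_differentiableOn hcrit hpre isOpen_ball hσ1 hg4 hg2 hσ3,
      hσ2, fun x hx => hpre _ (show eval (σ x) q ∈ Bas by rw [hσ3 x hx]; exact hg4 x hx)⟩, hσ3⟩
  have hP0 : P id := ⟨continuousOn_id, differentiableOn_id, rfl,
    fun x hx => hball_bas (ball_subset_closedBall hx)⟩
  set gs : ℕ → {g : ℂ → ℂ // P g} := fun n => Nat.rec ⟨id, hP0⟩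
    (fun _ prev => ⟨(hstep prev.1 prev.2).choose, (hstep prev.1 prev.2).choose_spec.1⟩) n
    with hgsdef
  have hgs_succ : ∀ n, ∀ x ∈ ball z₀ r₀, Q ((gs (n+1)).1 x) = (gs n).1 x :=
    fun n => (hstep (gs n).1 (gs n).2).choose_spec.2
  -- derivative computation
  set lamC : ℂ := q.derivative.eval z₀ with hlamCdef
  have hder : ∀ n, deriv (gs n).1 z₀ = (lamC⁻¹)^n := by
    intro n
    induction n with
    | zero => simp [hgsdef]
    | succ n ih =>
      have hgd : DifferentiableAt ℂ (gs (n+1)).1 z₀ :=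
        ((gs (n+1)).2.2.1 z₀ (mem_ball_self hr₀0)).differentiableAt
          (isOpen_ball.mem_nhds (mem_ball_self hr₀0))
      have h1 : (fun x => Q ((gs (n+1)).1 x)) =ᶠ[𝓝 z₀] (gs n).1 := by
        filter_upwards [ball_mem_nhds z₀ hr₀0] with y hy
        exact hgs_succ n y hy
      have h2 : deriv (fun x => Q ((gs (n+1)).1 x)) z₀ = deriv (gs n).1 z₀ :=
        h1.deriv_eq
      have h4 : deriv (fun x => Q ((gs (n+1)).1 x)) z₀ =
          q.derivative.eval ((gs (n+1)).1 z₀) * deriv (gs (n+1)).1 z₀ := by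
        rw [show (fun x => Q ((gs (n+1)).1 x)) = Q ∘ (gs (n+1)).1 from rfl]
        rw [deriv_comp z₀ q.differentiableAt hgd]
        rw [Polynomial.deriv]
      rw [(gs (n+1)).2.2.2.1] at h4
      rw [← hlamCdef] at h4
      have h5 : lamC * deriv (gs (n+1)).1 z₀ = (lamC⁻¹)^n := by
        rw [← ih, ← h2, h4]
      field_simp at h5
      rw [pow_succ]
      field_simp
      rw [mul_comm] at h5
      linear_combination h5
  -- Cauchy/Schwarz estimate
  have hcauchy : ∀ n, ‖deriv (gs n).1 z₀‖ ≤ (R + ‖z₀‖ + 1) / r₀ := by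
    intro n
    refine Complex.norm_deriv_le_div_of_mapsTo_ball (gs n).2.2.1 ?_ hr₀0
    intro x hx
    rw [mem_closedBall, (gs n).2.2.2.1]
    apply le_of_lt
    have h1 : ‖(gs n).1 x‖ < R := hbdd _ ((gs n).2.2.2.2 x hx)
    have h0z : (0:ℝ) ≤ ‖z₀‖ := norm_nonneg _
    calc dist ((gs n).1 x) z₀ ≤ ‖(gs n).1 x‖ + ‖z₀‖ := by
          rw [dist_eq_norm]; exact norm_sub_le _ _
      _ < R + ‖z₀‖ + 1 := by linarith
  have hlam1 : lam < 1 := hattr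
  have hlaminv : 1 < lam⁻¹ := (one_lt_inv₀ hlam0).2 hlam1
  obtain ⟨n, hn⟩ := pow_unbounded_of_one_lt ((R + ‖z₀‖ + 1)/r₀) hlaminv
  have h2 := hcauchy n
  rw [hder n, norm_pow, norm_inv] at h2
  have h3 : ‖lamC‖ = lam := by rw [hlamCdef, hlamdef]
  rw [h3] at h2
  linarith

/-- Bound on attracting and superattracting fixed points of an anti-polynomial of degree
`d ≥ 2`: there are at most `d - 1` of them. -/
theorem stmt6 (p : Polynomial ℂ) (d : ℕ) (hd : 2 ≤ d) (hdeg : p.natDegree = d) :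
    {z : ℂ | p.eval ((starRingEnd ℂ) z) = z ∧
      ‖p.derivative.eval ((starRingEnd ℂ) z)‖ < 1}.Finite ∧
    Set.ncard {z : ℂ | p.eval ((starRingEnd ℂ) z) = z ∧
      ‖p.derivative.eval ((starRingEnd ℂ) z)‖ < 1} ≤ d - 1 := by
  classical
  set S : Set ℂ := {z : ℂ | p.eval ((starRingEnd ℂ) z) = z ∧
      ‖p.derivative.eval ((starRingEnd ℂ) z)‖ < 1} with hSdef
  have hmapeval : ∀ (r : Polynomial ℂ) (w : ℂ),
      (r.map (starRingEnd ℂ)).eval w = (starRingEnd ℂ) (r.eval ((starRingEnd ℂ) w)) := by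
    intro r w
    rw [Polynomial.eval_map]
    have h := Polynomial.eval₂_hom (p := r) (f := starRingEnd ℂ) ((starRingEnd ℂ) w)
    rwa [Complex.conj_conj] at h
  set pb : Polynomial ℂ := p.map (starRingEnd ℂ) with hpbdef
  have hpbeval : ∀ w : ℂ, pb.eval w = (starRingEnd ℂ) (p.eval ((starRingEnd ℂ) w)) :=
    fun w => hmapeval p w
  set q : Polynomial ℂ := p.comp pb with hqdef
  have hqeval : ∀ z : ℂ, q.eval z = p.eval ((starRingEnd ℂ) (p.eval ((starRingEnd ℂ) z))) := by
    intro z; rw [hqdef, Polynomial.eval_comp, hpbeval]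
  have hqdeg : q.natDegree = d * d := by
    rw [hqdef, Polynomial.natDegree_comp, hpbdef,
      Polynomial.natDegree_map_eq_of_injective (starRingEnd ℂ).injective, hdeg]
  have hq2 : 2 ≤ q.natDegree := by rw [hqdeg]; nlinarith
  have hp'ne : p.derivative ≠ 0 := by
    intro h
    have := Polynomial.natDegree_eq_zero_of_derivative_eq_zero h
    omega
  have hpb' : ∀ w : ℂ, pb.derivative.eval w =
      (starRingEnd ℂ) (p.derivative.eval ((starRingEnd ℂ) w)) := by
    intro w
    rw [hpbdef, Polynomial.derivative_map]
    exact hmapeval p.derivative w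
  have hkey : ∀ z ∈ S, ∃ u : ℂ, p.derivative.eval ((starRingEnd ℂ) u) = 0 ∧
      Tendsto (fun n => (fun w => q.eval w)^[n] u) atTop (𝓝 z) := by
    intro z hz
    obtain ⟨hz1, hz2⟩ := hz
    have hfix : q.eval z = z := by rw [hqeval, hz1, hz1]
    have hqd : q.derivative.eval z =
        (starRingEnd ℂ) (p.derivative.eval ((starRingEnd ℂ) z)) *
          (p.derivative.eval ((starRingEnd ℂ) z)) := by
      rw [hqdef, Polynomial.derivative_comp, Polynomial.eval_mul, Polynomial.eval_comp]
      have h1 : pb.eval z = (starRingEnd ℂ) z := by rw [hpbeval, hz1]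
      rw [hpb', h1]
    have hattr : ‖q.derivative.eval z‖ < 1 := by
      rw [hqd, norm_mul]
      have h1 : ‖(starRingEnd ℂ) (p.derivative.eval ((starRingEnd ℂ) z))‖ =
          ‖p.derivative.eval ((starRingEnd ℂ) z)‖ := by
        rw [Complex.norm_conj]
      have h2 : ‖p.derivative.eval ((starRingEnd ℂ) z)‖ < 1 := by
        exact hz2
      have h3 := norm_nonneg (p.derivative.eval ((starRingEnd ℂ) z))
      rw [h1]
      nlinarith
    obtain ⟨w, hw1, hw2⟩ := crit_in_basin hq2 hfix hattr
    have hqdw : q.derivative.eval w = pb.derivative.eval w * p.derivative.eval (pb.eval w) := by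
      rw [hqdef, Polynomial.derivative_comp, Polynomial.eval_mul, Polynomial.eval_comp]
    rw [hqdw] at hw1
    rcases mul_eq_zero.1 hw1 with h | h
    · refine ⟨w, ?_, hw2⟩
      rw [hpb'] at h
      exact (_root_.map_eq_zero (starRingEnd ℂ)).1 h
    · set u : ℂ := p.eval ((starRingEnd ℂ) w) with hudef
      have hcu : (starRingEnd ℂ) u = pb.eval w := by
        rw [hudef]; exact (hpbeval w).symm
      refine ⟨u, by rw [hcu]; exact h, ?_⟩
      have hcomm : ∀ x : ℂ, q.eval (p.eval ((starRingEnd ℂ) x)) =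
          p.eval ((starRingEnd ℂ) (q.eval x)) := by
        intro x
        rw [hqeval, hqeval]
      have hFcont : Continuous (fun x : ℂ => p.eval ((starRingEnd ℂ) x)) :=
        p.continuous.comp Complex.continuous_conj
      have hiter : ∀ n : ℕ, (fun w => q.eval w)^[n] u =
          p.eval ((starRingEnd ℂ) ((fun w => q.eval w)^[n] w)) := by
        intro n
        induction n with
        | zero => simp [hudef]
        | succ n ih =>
          rw [Function.iterate_succ_apply', Function.iterate_succ_apply', ih]
          exact hcomm _
      have h4 : Tendsto (fun n => p.eval ((starRingEnd ℂ) ((fun w => q.eval w)^[n] w)))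
          atTop (𝓝 (p.eval ((starRingEnd ℂ) z))) := (hFcont.tendsto z).comp hw2
      rw [hz1] at h4
      rw [show (fun n => (fun w => q.eval w)^[n] u) =
        (fun n => p.eval ((starRingEnd ℂ) ((fun w => q.eval w)^[n] w))) from funext hiter]
      exact h4
  choose uf huf1 huf2 using hkey
  set g : ℂ → ℂ := fun z => if h : z ∈ S then (starRingEnd ℂ) (uf z h) else 0 with hgdef
  set roots : Finset ℂ := p.derivative.roots.toFinset with hrootsdef
  have hmaps : Set.MapsTo g S (↑roots : Set ℂ) := by
    intro z hz
    have h1 : g z = (starRingEnd ℂ) (uf z hz) := by rw [hgdef]; simp only [dif_pos hz]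
    rw [h1]
    rw [hrootsdef]
    simp only [Finset.mem_coe, Multiset.mem_toFinset]
    rw [Polynomial.mem_roots hp'ne]
    exact huf1 z hz
  have hinj : Set.InjOn g S := by
    intro z₁ h₁ z₂ h₂ heq
    have e1 : g z₁ = (starRingEnd ℂ) (uf z₁ h₁) := by rw [hgdef]; simp only [dif_pos h₁]
    have e2 : g z₂ = (starRingEnd ℂ) (uf z₂ h₂) := by rw [hgdef]; simp only [dif_pos h₂]
    rw [e1, e2] at heq
    have hu : uf z₁ h₁ = uf z₂ h₂ := (starRingEnd ℂ).injective heq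
    have t1 := huf2 z₁ h₁
    have t2 := huf2 z₂ h₂
    rw [hu] at t1
    exact tendsto_nhds_unique t1 t2
  have himfin : (g '' S).Finite := (roots.finite_toSet).subset hmaps.image_subset
  have hSfin : S.Finite := Set.Finite.of_finite_image himfin hinj
  refine ⟨hSfin, ?_⟩
  have hcard1 : S.ncard = (g '' S).ncard := (Set.ncard_image_of_injOn hinj).symm
  have hcard2 : (g '' S).ncard ≤ (↑roots : Set ℂ).ncard :=
    Set.ncard_le_ncard hmaps.image_subset (roots.finite_toSet)
  have hcard3 : (↑roots : Set ℂ).ncard = roots.card := Set.ncard_coe_finset _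
  have hcard4 : roots.card ≤ p.derivative.roots.toFinset.card := by rw [hrootsdef]
  have hcard5 : p.derivative.roots.toFinset.card ≤ Multiset.card p.derivative.roots :=
    Multiset.toFinset_card_le _
  have hcard6 : Multiset.card p.derivative.roots ≤ p.derivative.natDegree :=
    Polynomial.card_roots' _
  have hcard7 : p.derivative.natDegree ≤ d - 1 := by
    have := Polynomial.natDegree_derivative_le p
    omega
  omega
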